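/- Let (x_{jk})_{j≠k, j,k∈ℕ} be i.i.d. random vectors in ℝ^p with entrywise E[(x_{jk} x_{jk}^T)²] < ∞. For each n and each configuration i ∈ {2,3,4,5}, the average |Θ_i|^{-1} Σ_{((j,k),(l,m))∈Θ_i} x_{jk} x_{lm}^T over dyads among the first n actors converges in probability, entrywise as n → ∞, to E[x_{jk}] E[x_{jk}]^T; for i = 1 the corresponding average converges in probability to E[x_{jk} x_{jk}^T]. -/

import Mathlib

open MeasureTheory ProbabilityTheory Filter
open scoped BigOperators Topology ENNReal NNReal

/-- The ordered dyads among the first `n` actors: ordered pairs `(i,j)`, `i ≠ j`,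
with `i, j ∈ {0, …, n-1}`. -/
def dyads (n : ℕ) : Finset (ℕ × ℕ) :=
  (Finset.range n ×ˢ Finset.range n).filter fun p => p.1 ≠ p.2

/-- The five configuration sets `Θ_1, …, Θ_5` of ordered dyad pairs among the first `n`
actors: identical, reciprocal, common receiver, common sender, head-to-tail. -/
def theta (n : ℕ) : Fin 5 → Finset ((ℕ × ℕ) × (ℕ × ℕ)) :=
  ![(dyads n ×ˢ dyads n).filter fun q => q.2 = q.1,
    (dyads n ×ˢ dyads n).filter fun q => q.2.1 = q.1.2 ∧ q.2.2 = q.1.1,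
    (dyads n ×ˢ dyads n).filter fun q => q.2.2 = q.1.2 ∧ q.2.1 ≠ q.1.1 ∧ q.2.1 ≠ q.1.2,
    (dyads n ×ˢ dyads n).filter fun q => q.2.1 = q.1.1 ∧ q.2.2 ≠ q.1.2 ∧ q.2.2 ≠ q.1.1,
    (dyads n ×ˢ dyads n).filter fun q =>
      (q.2.1 = q.1.2 ∧ q.2.2 ≠ q.1.1 ∧ q.2.2 ≠ q.1.2) ∨
      (q.2.2 = q.1.1 ∧ q.2.1 ≠ q.1.1 ∧ q.2.1 ≠ q.1.2)]

lemma mem_dyads {n : ℕ} {d : ℕ × ℕ} :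
    d ∈ dyads n ↔ d.1 < n ∧ d.2 < n ∧ d.1 ≠ d.2 := by
  simp [dyads, Finset.mem_filter, Finset.mem_product, and_assoc]

lemma dyads_eq (n : ℕ) :
    dyads n = (Finset.range n).biUnion fun j => {j} ×ˢ ((Finset.range n).erase j) := by
  ext ⟨j, k⟩
  simp only [mem_dyads, Finset.mem_biUnion, Finset.mem_range, Finset.mem_product,
    Finset.mem_singleton, Finset.mem_erase]
  constructor
  · rintro ⟨h1, h2, h3⟩
    exact ⟨j, h1, rfl, Ne.symm h3, h2⟩
  · rintro ⟨j', hj', rfl, hk, hkn⟩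
    exact ⟨hj', hkn, Ne.symm hk⟩

lemma card_dyads (n : ℕ) : (dyads n).card = n * (n - 1) := by
  rw [dyads_eq, Finset.card_biUnion]
  · have : ∀ j ∈ Finset.range n,
        ({j} ×ˢ ((Finset.range n).erase j)).card = n - 1 := by
      intro j hj
      rw [Finset.card_product, Finset.card_singleton, one_mul,
        Finset.card_erase_of_mem hj, Finset.card_range]
    rw [Finset.sum_congr rfl this, Finset.sum_const, Finset.card_range, smul_eq_mul]
  · intro i hi j hj hij
    simp only [Finset.disjoint_left]
    rintro ⟨u, v⟩ h1 h2
    simp only [Finset.mem_product, Finset.mem_singleton] at h1 h2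
    exact hij (h1.1 ▸ h2.1 ▸ rfl)

/-- triples (d, l) with d a dyad and l a third distinct actor -/
def trip (n : ℕ) : Finset ((ℕ × ℕ) × ℕ) :=
  (dyads n ×ˢ Finset.range n).filter fun t => t.2 ≠ t.1.1 ∧ t.2 ≠ t.1.2

lemma trip_eq (n : ℕ) :
    trip n = (dyads n).biUnion fun d => {d} ×ˢ (((Finset.range n).erase d.1).erase d.2) := by
  ext ⟨d, l⟩
  simp only [trip, Finset.mem_filter, Finset.mem_product, Finset.mem_biUnion,
    Finset.mem_singleton, Finset.mem_erase]
  constructor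
  · rintro ⟨⟨hd, hl⟩, h1, h2⟩
    exact ⟨d, hd, rfl, h2, h1, hl⟩
  · rintro ⟨d', hd', rfl, h2, h1, hl⟩
    exact ⟨⟨hd', hl⟩, h1, h2⟩

lemma card_trip (n : ℕ) : (trip n).card = n * (n - 1) * (n - 2) := by
  rw [trip_eq, Finset.card_biUnion]
  · have : ∀ d ∈ dyads n,
        ({d} ×ˢ (((Finset.range n).erase d.1).erase d.2)).card = n - 2 := by
      intro d hd
      obtain ⟨h1, h2, h3⟩ := mem_dyads.mp hd
      rw [Finset.card_product, Finset.card_singleton, one_mul,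
        Finset.card_erase_of_mem (Finset.mem_erase.mpr ⟨Ne.symm h3, Finset.mem_range.mpr h2⟩),
        Finset.card_erase_of_mem (Finset.mem_range.mpr h1), Finset.card_range]
      omega
    rw [Finset.sum_congr rfl this, Finset.sum_const, card_dyads, smul_eq_mul]
  · intro i hi j hj hij
    simp only [Finset.disjoint_left]
    rintro ⟨u, v⟩ h1 h2
    simp only [Finset.mem_product, Finset.mem_singleton] at h1 h2
    exact hij (h1.1 ▸ h2.1 ▸ rfl)

lemma theta_zero (n : ℕ) : theta n 0 = (dyads n ×ˢ dyads n).filter fun q => q.2 = q.1 := rfl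
lemma theta_one (n : ℕ) : theta n 1 =
    (dyads n ×ˢ dyads n).filter fun q => q.2.1 = q.1.2 ∧ q.2.2 = q.1.1 := rfl
lemma theta_two (n : ℕ) : theta n 2 =
    (dyads n ×ˢ dyads n).filter fun q => q.2.2 = q.1.2 ∧ q.2.1 ≠ q.1.1 ∧ q.2.1 ≠ q.1.2 := rfl
lemma theta_three (n : ℕ) : theta n 3 =
    (dyads n ×ˢ dyads n).filter fun q => q.2.1 = q.1.1 ∧ q.2.2 ≠ q.1.2 ∧ q.2.2 ≠ q.1.1 := rfl
lemma theta_four (n : ℕ) : theta n 4 =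
    (dyads n ×ˢ dyads n).filter fun q =>
      (q.2.1 = q.1.2 ∧ q.2.2 ≠ q.1.1 ∧ q.2.2 ≠ q.1.2) ∨
      (q.2.2 = q.1.1 ∧ q.2.1 ≠ q.1.1 ∧ q.2.1 ≠ q.1.2) := rfl

lemma theta_subset (n : ℕ) (i : Fin 5) : theta n i ⊆ dyads n ×ˢ dyads n := by
  fin_cases i <;> exact Finset.filter_subset _ _

lemma mem_theta_dyads {n : ℕ} {i : Fin 5} {q : (ℕ × ℕ) × (ℕ × ℕ)} (h : q ∈ theta n i) :
    q.1 ∈ dyads n ∧ q.2 ∈ dyads n :=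
  Finset.mem_product.mp (theta_subset n i h)

lemma card_theta_zero (n : ℕ) : (theta n 0).card = n * (n - 1) := by
  have h : theta n 0 = (dyads n).image fun d => (d, d) := by
    ext ⟨d1, d2⟩
    simp only [theta_zero, Finset.mem_filter, Finset.mem_product, Finset.mem_image,
      Prod.mk.injEq]
    constructor
    · rintro ⟨⟨h1, h2⟩, rfl⟩; exact ⟨d2, h1, rfl, rfl⟩
    · rintro ⟨d, hd, rfl, rfl⟩; exact ⟨⟨hd, hd⟩, rfl⟩
  rw [h, Finset.card_image_of_injective _ (fun u v h => (Prod.mk.injEq _ _ _ _ ▸ h).1),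
    card_dyads]

lemma card_theta_one (n : ℕ) : (theta n 1).card = n * (n - 1) := by
  have h : theta n 1 = (dyads n).image fun d => (d, (d.2, d.1)) := by
    ext ⟨d1, d2⟩
    simp only [theta_one, Finset.mem_filter, Finset.mem_product, Finset.mem_image,
      Prod.mk.injEq]
    constructor
    · rintro ⟨⟨h1, h2⟩, h3, h4⟩
      exact ⟨d1, h1, rfl, by rw [← h3, ← h4]⟩
    · rintro ⟨d, hd, rfl, rfl⟩
      exact ⟨⟨hd, mem_dyads.mpr ⟨(mem_dyads.mp hd).2.1, (mem_dyads.mp hd).1,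
        Ne.symm (mem_dyads.mp hd).2.2⟩⟩, rfl, rfl⟩
  rw [h, Finset.card_image_of_injective _ (fun u v h => (Prod.mk.injEq _ _ _ _ ▸ h).1),
    card_dyads]

lemma card_trip_le_theta_two (n : ℕ) : (trip n).card ≤ (theta n 2).card := by
  apply Finset.card_le_card_of_injOn (fun t => (t.1, (t.2, t.1.2)))
  · rintro ⟨⟨j, k⟩, l⟩ ht
    simp only [Finset.mem_coe, trip, Finset.mem_filter, Finset.mem_product, Finset.mem_range] at ht
    obtain ⟨⟨hd, hl⟩, h1, h2⟩ := ht
    obtain ⟨hj, hk, hjk⟩ := mem_dyads.mp hd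
    rw [Finset.mem_coe, theta_two, Finset.mem_filter, Finset.mem_product]
    exact ⟨⟨hd, mem_dyads.mpr ⟨hl, hk, h2⟩⟩, rfl, h1, h2⟩
  · rintro ⟨⟨j, k⟩, l⟩ _ ⟨⟨j', k'⟩, l'⟩ _ h
    simp only [Prod.mk.injEq] at h
    simp [h.1.1, h.1.2, h.2.1]

lemma card_trip_le_theta_three (n : ℕ) : (trip n).card ≤ (theta n 3).card := by
  apply Finset.card_le_card_of_injOn (fun t => (t.1, (t.1.1, t.2)))
  · rintro ⟨⟨j, k⟩, l⟩ ht
    simp only [Finset.mem_coe, trip, Finset.mem_filter, Finset.mem_product, Finset.mem_range] at ht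
    obtain ⟨⟨hd, hl⟩, h1, h2⟩ := ht
    obtain ⟨hj, hk, hjk⟩ := mem_dyads.mp hd
    rw [Finset.mem_coe, theta_three, Finset.mem_filter, Finset.mem_product]
    exact ⟨⟨hd, mem_dyads.mpr ⟨hj, hl, Ne.symm h1⟩⟩, rfl, h2, h1⟩
  · rintro ⟨⟨j, k⟩, l⟩ _ ⟨⟨j', k'⟩, l'⟩ _ h
    simp only [Prod.mk.injEq] at h
    simp [h.1.1, h.1.2, h.2.2]

lemma card_trip_le_theta_four (n : ℕ) : (trip n).card ≤ (theta n 4).card := by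
  apply Finset.card_le_card_of_injOn (fun t => (t.1, (t.1.2, t.2)))
  · rintro ⟨⟨j, k⟩, l⟩ ht
    simp only [Finset.mem_coe, trip, Finset.mem_filter, Finset.mem_product, Finset.mem_range] at ht
    obtain ⟨⟨hd, hl⟩, h1, h2⟩ := ht
    obtain ⟨hj, hk, hjk⟩ := mem_dyads.mp hd
    rw [Finset.mem_coe, theta_four, Finset.mem_filter, Finset.mem_product]
    exact ⟨⟨hd, mem_dyads.mpr ⟨hk, hl, Ne.symm h2⟩⟩, Or.inl ⟨rfl, h1, h2⟩⟩
  · rintro ⟨⟨j, k⟩, l⟩ _ ⟨⟨j', k'⟩, l'⟩ _ h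
    simp only [Prod.mk.injEq] at h
    simp [h.1.1, h.1.2, h.2.2]

lemma card_quad_le {α : Type*} [DecidableEq α] (a b c d : α) :
    ({a, b, c, d} : Finset α).card ≤ 4 := by
  have h1 := Finset.card_insert_le a ({b, c, d} : Finset α)
  have h2 := Finset.card_insert_le b ({c, d} : Finset α)
  have h3 := Finset.card_insert_le c ({d} : Finset α)
  simp only [Finset.card_singleton] at *
  omega

lemma overlap_le_zero (n : ℕ) (q : (ℕ × ℕ) × (ℕ × ℕ)) :
    ((theta n 0).filter fun q' =>
      q'.1 = q.1 ∨ q'.1 = q.2 ∨ q'.2 = q.1 ∨ q'.2 = q.2).card ≤ 4 := by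
  have hsub : (theta n 0).filter (fun q' =>
      q'.1 = q.1 ∨ q'.1 = q.2 ∨ q'.2 = q.1 ∨ q'.2 = q.2) ⊆
      ({(q.1, q.1), (q.2, q.2)} : Finset _) := by
    intro q' hq'
    rw [theta_zero] at hq'
    simp only [Finset.mem_filter, Finset.mem_product, Prod.ext_iff] at hq'
    simp only [Finset.mem_insert, Finset.mem_singleton, Prod.ext_iff]
    omega
  have h2 : ({(q.1, q.1), (q.2, q.2)} : Finset ((ℕ × ℕ) × (ℕ × ℕ))).card ≤ 2 :=
    Finset.card_insert_le _ _ |>.trans (by simp)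
  exact (Finset.card_le_card hsub).trans (h2.trans (by omega))

lemma overlap_le_one (n : ℕ) (q : (ℕ × ℕ) × (ℕ × ℕ)) :
    ((theta n 1).filter fun q' =>
      q'.1 = q.1 ∨ q'.1 = q.2 ∨ q'.2 = q.1 ∨ q'.2 = q.2).card ≤ 4 := by
  have hsub : (theta n 1).filter (fun q' =>
      q'.1 = q.1 ∨ q'.1 = q.2 ∨ q'.2 = q.1 ∨ q'.2 = q.2) ⊆
      ({(q.1, (q.1.2, q.1.1)), (q.2, (q.2.2, q.2.1)),
        ((q.1.2, q.1.1), q.1), ((q.2.2, q.2.1), q.2)} : Finset _) := by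
    intro q' hq'
    rw [theta_one, Finset.mem_filter] at hq'
    obtain ⟨hmem, hor⟩ := hq'
    rw [Finset.mem_filter] at hmem
    obtain ⟨-, h3, h4⟩ := hmem
    simp only [Finset.mem_insert, Finset.mem_singleton]
    rcases hor with h|h|h|h
    · exact Or.inl (Prod.ext h (Prod.ext (by rw [h3, h]) (by rw [h4, h])))
    · exact Or.inr (Or.inl (Prod.ext h (Prod.ext (by rw [h3, h]) (by rw [h4, h]))))
    · refine Or.inr (Or.inr (Or.inl (Prod.ext (Prod.ext ?_ ?_) h)))
      · rw [← h4, h]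
      · rw [← h3, h]
    · exact Or.inr (Or.inr (Or.inr (Prod.ext (Prod.ext (by rw [← h4, h]) (by rw [← h3, h])) h)))
  exact (Finset.card_le_card hsub).trans (card_quad_le _ _ _ _)

lemma overlap_le_gen (n : ℕ) (i : Fin 5) (q : (ℕ × ℕ) × (ℕ × ℕ)) :
    ((theta n i).filter fun q' =>
      q'.1 = q.1 ∨ q'.1 = q.2 ∨ q'.2 = q.1 ∨ q'.2 = q.2).card ≤ 4 * (n * (n - 1)) := by
  have h1 : ∀ d : ℕ × ℕ, ((theta n i).filter fun q' => q'.1 = d).card ≤ n * (n - 1) := by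
    intro d
    have hsub : (theta n i).filter (fun q' => q'.1 = d) ⊆ ({d} : Finset (ℕ × ℕ)) ×ˢ dyads n := by
      intro q' hq'
      rw [Finset.mem_filter] at hq'
      exact Finset.mem_product.mpr ⟨by simp [hq'.2], (mem_theta_dyads hq'.1).2⟩
    refine (Finset.card_le_card hsub).trans (le_of_eq ?_)
    rw [Finset.card_product, Finset.card_singleton, one_mul, card_dyads]
  have h2 : ∀ d : ℕ × ℕ, ((theta n i).filter fun q' => q'.2 = d).card ≤ n * (n - 1) := by
    intro d
    have hsub : (theta n i).filter (fun q' => q'.2 = d) ⊆ dyads n ×ˢ ({d} : Finset (ℕ × ℕ)) := by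
      intro q' hq'
      rw [Finset.mem_filter] at hq'
      exact Finset.mem_product.mpr ⟨(mem_theta_dyads hq'.1).1, by simp [hq'.2]⟩
    refine (Finset.card_le_card hsub).trans (le_of_eq ?_)
    rw [Finset.card_product, Finset.card_singleton, mul_one, card_dyads]
  have hsub : (theta n i).filter (fun q' =>
        q'.1 = q.1 ∨ q'.1 = q.2 ∨ q'.2 = q.1 ∨ q'.2 = q.2) ⊆
      (((theta n i).filter fun q' => q'.1 = q.1) ∪ ((theta n i).filter fun q' => q'.1 = q.2)) ∪
      (((theta n i).filter fun q' => q'.2 = q.1) ∪ ((theta n i).filter fun q' => q'.2 = q.2)) := by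
    intro q' hq'
    simp only [Finset.mem_filter, Finset.mem_union] at hq' ⊢
    tauto
  refine (Finset.card_le_card hsub).trans ?_
  have a0 := Finset.card_union_le
    (((theta n i).filter fun q' => q'.1 = q.1) ∪ ((theta n i).filter fun q' => q'.1 = q.2))
    (((theta n i).filter fun q' => q'.2 = q.1) ∪ ((theta n i).filter fun q' => q'.2 = q.2))
  have a1 := Finset.card_union_le ((theta n i).filter fun q' => q'.1 = q.1)
    ((theta n i).filter fun q' => q'.1 = q.2)
  have a2 := Finset.card_union_le ((theta n i).filter fun q' => q'.2 = q.1)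
    ((theta n i).filter fun q' => q'.2 = q.2)
  have b1 := h1 q.1; have b2 := h1 q.2; have b3 := h2 q.1; have b4 := h2 q.2
  omega

variable {Ω : Type} [MeasureSpace Ω] [IsProbabilityMeasure (volume : Measure Ω)]

lemma integrable_mul_of_sq {f g : Ω → ℝ} (hf : MemLp f 2 volume) (hg : MemLp g 2 volume) :
    Integrable (fun ω => f ω * g ω) volume := by
  refine Integrable.mono' ((hf.integrable_sq.add hg.integrable_sq).div_const 2)
    (hf.aestronglyMeasurable.mul hg.aestronglyMeasurable)
    (Filter.Eventually.of_forall fun ω => ?_)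
  simp only [Pi.add_apply, Real.norm_eq_abs]
  rw [abs_mul]
  nlinarith [sq_nonneg (|f ω| - |g ω|), sq_abs (f ω), sq_abs (g ω), abs_nonneg (f ω),
    abs_nonneg (g ω)]

lemma tendstoInMeasure_of_sq_integral {Z : ℕ → Ω → ℝ} (c : ℝ)
    (hmeas : ∀ n, AEStronglyMeasurable (Z n) volume)
    (hint : ∀ᶠ n in atTop, Integrable (fun ω => (Z n ω - c) ^ 2) volume)
    (h : Tendsto (fun n => ∫ ω, (Z n ω - c) ^ 2) atTop (𝓝 0)) :
    TendstoInMeasure volume Z atTop (fun _ => c) := by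
  rw [tendstoInMeasure_iff_dist]
  intro ε hε
  have hbound : ∀ᶠ n in atTop, volume {ω | ε ≤ dist (Z n ω) c}
      ≤ ENNReal.ofReal (ε⁻¹ ^ 2 * ∫ ω, (Z n ω - c) ^ 2) := by
    filter_upwards [hint] with n hn
    have hset : {ω | ε ≤ dist (Z n ω) c} = {ω | ε ^ 2 ≤ (Z n ω - c) ^ 2} := by
      ext ω
      simp only [Set.mem_setOf_eq, Real.dist_eq]
      rw [← sq_abs (Z n ω - c)]
      exact (pow_le_pow_iff_left₀ hε.le (abs_nonneg _) two_ne_zero).symm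
    rw [hset]
    have hm := mul_meas_ge_le_integral_of_nonneg
      (Filter.Eventually.of_forall fun ω => sq_nonneg (Z n ω - c)) hn (ε ^ 2)
    have hfin : volume {ω | ε ^ 2 ≤ (Z n ω - c) ^ 2} ≠ ⊤ := measure_ne_top _ _
    rw [← ENNReal.ofReal_toReal hfin]
    apply ENNReal.ofReal_le_ofReal
    have hε2 : (0:ℝ) < ε ^ 2 := by positivity
    have hinv : ε⁻¹ ^ 2 * ε ^ 2 = 1 := by
      field_simp
    rw [measureReal_def] at hm
    nlinarith [ENNReal.toReal_nonneg (a := volume {ω | ε ^ 2 ≤ (Z n ω - c) ^ 2})]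
  have hub : Tendsto (fun n => ENNReal.ofReal (ε⁻¹ ^ 2 * ∫ ω, (Z n ω - c) ^ 2)) atTop (𝓝 0) := by
    have := ENNReal.tendsto_ofReal (a := 0) (by simpa using h.const_mul (ε⁻¹ ^ 2))
    simpa using this
  exact tendsto_of_tendsto_of_tendsto_of_le_of_le' tendsto_const_nhds hub
    (Filter.Eventually.of_forall fun n => zero_le) hbound

lemma engine (Z : (ℕ × ℕ) × (ℕ × ℕ) → Ω → ℝ) (T : ℕ → Finset ((ℕ × ℕ) × (ℕ × ℕ)))
    (c C : ℝ) (b : ℕ → ℕ)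
    (hmeas : ∀ q, AEStronglyMeasurable (Z q) volume)
    (hL2 : ∀ n, ∀ q ∈ T n, MemLp (Z q) 2 volume)
    (hmean : ∀ n, ∀ q ∈ T n, ∫ ω, Z q ω = c)
    (hvar : ∀ n, ∀ q ∈ T n, ∫ ω, (Z q ω) ^ 2 ≤ C)
    (hdec : ∀ n, ∀ q ∈ T n, ∀ q' ∈ T n, q'.1 ≠ q.1 → q'.1 ≠ q.2 → q'.2 ≠ q.1 → q'.2 ≠ q.2 →
      ∫ ω, Z q ω * Z q' ω = (∫ ω, Z q ω) * ∫ ω, Z q' ω)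
    (hover : ∀ n, ∀ q ∈ T n,
      ((T n).filter fun q' => q'.1 = q.1 ∨ q'.1 = q.2 ∨ q'.2 = q.1 ∨ q'.2 = q.2).card ≤ b n)
    (hne : ∀ᶠ n in atTop, (T n).card ≠ 0)
    (hratio : Tendsto (fun n => (b n : ℝ) / ((T n).card : ℝ)) atTop (𝓝 0)) :
    TendstoInMeasure volume
      (fun n ω => (((T n).card : ℝ))⁻¹ * ∑ q ∈ T n, Z q ω) atTop (fun _ => c) := by
  have hC0 : 0 ≤ C := by
    obtain ⟨n₀, hn₀⟩ := hne.exists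
    obtain ⟨q₀, hq₀⟩ := Finset.card_ne_zero.mp hn₀
    exact le_trans (integral_nonneg fun ω => sq_nonneg _) (hvar n₀ q₀ hq₀)
  set W : (ℕ × ℕ) × (ℕ × ℕ) → Ω → ℝ := fun q ω => Z q ω - c with hWdef
  have hW2 : ∀ n, ∀ q ∈ T n, MemLp (W q) 2 volume :=
    fun n q hq => (hL2 n q hq).sub (memLp_const c)
  have hZint : ∀ n, ∀ q ∈ T n, Integrable (Z q) volume :=
    fun n q hq => (hL2 n q hq).integrable one_le_two
  have hWsq : ∀ n, ∀ q ∈ T n, ∫ ω, (W q ω) ^ 2 ≤ C := by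
    intro n q hq
    have hrw : (fun ω => (W q ω) ^ 2) = fun ω => Z q ω ^ 2 - 2 * c * Z q ω + c ^ 2 := by
      funext ω; simp only [hWdef]; ring
    have hi1 : Integrable (fun ω => Z q ω ^ 2) volume := (hL2 n q hq).integrable_sq
    have hi2 : Integrable (fun ω => 2 * c * Z q ω) volume := (hZint n q hq).const_mul (2 * c)
    have hi12 : Integrable (fun ω => Z q ω ^ 2 - 2 * c * Z q ω) volume := hi1.sub hi2
    rw [hrw, integral_add hi12 (integrable_const _), integral_sub hi1 hi2,
      integral_const_mul, hmean n q hq, integral_const]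
    have := hvar n q hq
    simp only [probReal_univ, measure_univ, ENNReal.toReal_one, smul_eq_mul, one_mul]
    nlinarith [sq_nonneg c]
  have hrepr : ∀ n, (T n).card ≠ 0 →
      (fun ω => ((T n).card : ℝ)⁻¹ * ∑ q ∈ T n, Z q ω - c) =
        fun ω => ((T n).card : ℝ)⁻¹ * ∑ q ∈ T n, W q ω := by
    intro n hT
    have hne0 : ((T n).card : ℝ) ≠ 0 := Nat.cast_ne_zero.mpr hT
    funext ω
    simp only [hWdef]
    rw [Finset.sum_sub_distrib, mul_sub, Finset.sum_const, nsmul_eq_mul, ← mul_assoc,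
      inv_mul_cancel₀ hne0, one_mul]
  have key : ∀ n, (T n).card ≠ 0 →
      ∫ ω, (((T n).card : ℝ)⁻¹ * ∑ q ∈ T n, Z q ω - c) ^ 2 ≤
        C * ((b n : ℝ) / ((T n).card : ℝ)) := by
    intro n hT
    have hcardpos : (0:ℝ) < ((T n).card : ℝ) := by exact_mod_cast Nat.pos_of_ne_zero hT
    have hprod : ∀ q ∈ T n, ∀ q' ∈ T n, Integrable (fun ω => W q ω * W q' ω) volume :=
      fun q hq q' hq' => integrable_mul_of_sq (hW2 n q hq) (hW2 n q' hq')
    have hexp : ∫ ω, (∑ q ∈ T n, W q ω) ^ 2 =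
        ∑ q ∈ T n, ∑ q' ∈ T n, ∫ ω, W q ω * W q' ω := by
      have h1 : (fun ω => (∑ q ∈ T n, W q ω) ^ 2) =
          fun ω => ∑ q ∈ T n, ∑ q' ∈ T n, W q ω * W q' ω := by
        funext ω; rw [sq, Finset.sum_mul_sum]
      rw [h1, integral_finset_sum _ (fun q hq => integrable_finset_sum _
        (fun q' hq' => hprod q hq q' hq'))]
      exact Finset.sum_congr rfl fun q hq =>
        integral_finset_sum _ fun q' hq' => hprod q hq q' hq'
    have hsplit : ∑ q ∈ T n, ∑ q' ∈ T n, ∫ ω, W q ω * W q' ω =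
        (∑ p ∈ (T n ×ˢ T n).filter (fun p =>
            p.2.1 = p.1.1 ∨ p.2.1 = p.1.2 ∨ p.2.2 = p.1.1 ∨ p.2.2 = p.1.2),
          ∫ ω, W p.1 ω * W p.2 ω) +
        ∑ p ∈ (T n ×ˢ T n).filter (fun p =>
            ¬(p.2.1 = p.1.1 ∨ p.2.1 = p.1.2 ∨ p.2.2 = p.1.1 ∨ p.2.2 = p.1.2)),
          ∫ ω, W p.1 ω * W p.2 ω := by
      rw [← Finset.sum_product' (f := fun q q' => ∫ ω, W q ω * W q' ω),
        ← Finset.sum_filter_add_sum_filter_not (T n ×ˢ T n)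
          (fun p => p.2.1 = p.1.1 ∨ p.2.1 = p.1.2 ∨ p.2.2 = p.1.1 ∨ p.2.2 = p.1.2)]
    have hfar : ∀ p ∈ (T n ×ˢ T n).filter (fun p =>
        ¬(p.2.1 = p.1.1 ∨ p.2.1 = p.1.2 ∨ p.2.2 = p.1.1 ∨ p.2.2 = p.1.2)),
        ∫ ω, W p.1 ω * W p.2 ω = 0 := by
      intro p hp
      rw [Finset.mem_filter, Finset.mem_product] at hp
      obtain ⟨⟨hq, hq'⟩, hfarp⟩ := hp
      push_neg at hfarp
      obtain ⟨e1, e2, e3, e4⟩ := hfarp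
      have hZZ : ∫ ω, Z p.1 ω * Z p.2 ω = c * c := by
        rw [hdec n p.1 hq p.2 hq' e1 e2 e3 e4, hmean n p.1 hq, hmean n p.2 hq']
      have hZZint : Integrable (fun ω => Z p.1 ω * Z p.2 ω) volume :=
        integrable_mul_of_sq (hL2 n p.1 hq) (hL2 n p.2 hq')
      have hrw : (fun ω => W p.1 ω * W p.2 ω) =
          fun ω => Z p.1 ω * Z p.2 ω - c * Z p.1 ω - c * Z p.2 ω + c ^ 2 := by
        funext ω; simp only [hWdef]; ring
      have hi1 : Integrable (fun ω => c * Z p.1 ω) volume := (hZint n p.1 hq).const_mul c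
      have hi2 : Integrable (fun ω => c * Z p.2 ω) volume := (hZint n p.2 hq').const_mul c
      have hi3 : Integrable (fun ω => Z p.1 ω * Z p.2 ω - c * Z p.1 ω) volume := hZZint.sub hi1
      have hi4 : Integrable (fun ω => Z p.1 ω * Z p.2 ω - c * Z p.1 ω - c * Z p.2 ω) volume :=
        hi3.sub hi2
      rw [hrw, integral_add hi4 (integrable_const _), integral_sub hi3 hi2,
        integral_sub hZZint hi1, integral_const_mul, integral_const_mul, hZZ,
        hmean n p.1 hq, hmean n p.2 hq', integral_const]
      simp only [probReal_univ, measure_univ, ENNReal.toReal_one, smul_eq_mul, one_mul]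
      ring
    have hnear : ∀ p ∈ (T n ×ˢ T n).filter (fun p =>
        p.2.1 = p.1.1 ∨ p.2.1 = p.1.2 ∨ p.2.2 = p.1.1 ∨ p.2.2 = p.1.2),
        ∫ ω, W p.1 ω * W p.2 ω ≤ C := by
      intro p hp
      rw [Finset.mem_filter, Finset.mem_product] at hp
      obtain ⟨⟨hq, hq'⟩, -⟩ := hp
      have hpt : ∀ ω, W p.1 ω * W p.2 ω ≤ (W p.1 ω ^ 2 + W p.2 ω ^ 2) / 2 := by
        intro ω
        have h0 := sq_nonneg (W p.1 ω - W p.2 ω)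
        ring_nf at h0 ⊢
        linarith
      calc ∫ ω, W p.1 ω * W p.2 ω
          ≤ ∫ ω, (W p.1 ω ^ 2 + W p.2 ω ^ 2) / 2 :=
            integral_mono (hprod p.1 hq p.2 hq')
              (((hW2 n p.1 hq).integrable_sq.add (hW2 n p.2 hq').integrable_sq).div_const 2) hpt
        _ ≤ C := by
            rw [integral_div, integral_add (hW2 n p.1 hq).integrable_sq
              (hW2 n p.2 hq').integrable_sq]
            have h1 := hWsq n p.1 hq; have h2 := hWsq n p.2 hq'
            linarith
    have hnearcard : (((T n ×ˢ T n).filter (fun p =>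
        p.2.1 = p.1.1 ∨ p.2.1 = p.1.2 ∨ p.2.2 = p.1.1 ∨ p.2.2 = p.1.2)).card : ℕ)
        ≤ (T n).card * b n := by
      have hsub : (T n ×ˢ T n).filter (fun p =>
          p.2.1 = p.1.1 ∨ p.2.1 = p.1.2 ∨ p.2.2 = p.1.1 ∨ p.2.2 = p.1.2) ⊆
          (T n).biUnion (fun q => {q} ×ˢ ((T n).filter (fun q' =>
            q'.1 = q.1 ∨ q'.1 = q.2 ∨ q'.2 = q.1 ∨ q'.2 = q.2))) := by
        intro p hp
        rw [Finset.mem_filter, Finset.mem_product] at hp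
        rw [Finset.mem_biUnion]
        refine ⟨p.1, hp.1.1, ?_⟩
        rw [Finset.mem_product]
        exact ⟨Finset.mem_singleton_self _, Finset.mem_filter.mpr ⟨hp.1.2, hp.2⟩⟩
      refine (Finset.card_le_card hsub).trans (Finset.card_biUnion_le.trans ?_)
      have hb : ∀ q ∈ T n, ({q} ×ˢ ((T n).filter (fun q' =>
          q'.1 = q.1 ∨ q'.1 = q.2 ∨ q'.2 = q.1 ∨ q'.2 = q.2))).card ≤ b n := by
        intro q hq
        rw [Finset.card_product, Finset.card_singleton, one_mul]
        exact hover n q hq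
      simpa using Finset.sum_le_card_nsmul _ _ _ hb
    have hsum_bound : ∫ ω, (∑ q ∈ T n, W q ω) ^ 2 ≤ ((T n).card : ℝ) * (b n : ℝ) * C := by
      rw [hexp, hsplit, Finset.sum_eq_zero hfar, add_zero]
      refine (Finset.sum_le_card_nsmul _ _ _ hnear).trans ?_
      rw [nsmul_eq_mul]
      have hcast : ((((T n ×ˢ T n).filter (fun p =>
          p.2.1 = p.1.1 ∨ p.2.1 = p.1.2 ∨ p.2.2 = p.1.1 ∨ p.2.2 = p.1.2)).card : ℝ)) ≤
          ((T n).card : ℝ) * (b n : ℝ) := by exact_mod_cast hnearcard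
      exact mul_le_mul_of_nonneg_right hcast hC0
    have hptw : ∀ ω, (((T n).card : ℝ)⁻¹ * ∑ q ∈ T n, Z q ω - c) ^ 2 =
        (((T n).card : ℝ)⁻¹) ^ 2 * (∑ q ∈ T n, W q ω) ^ 2 := by
      intro ω
      rw [congrFun (hrepr n hT) ω, mul_pow]
    calc ∫ ω, (((T n).card : ℝ)⁻¹ * ∑ q ∈ T n, Z q ω - c) ^ 2
        = (((T n).card : ℝ)⁻¹) ^ 2 * ∫ ω, (∑ q ∈ T n, W q ω) ^ 2 := by
          simp_rw [hptw]; rw [integral_const_mul]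
      _ ≤ (((T n).card : ℝ)⁻¹) ^ 2 * (((T n).card : ℝ) * (b n : ℝ) * C) :=
          mul_le_mul_of_nonneg_left hsum_bound (by positivity)
      _ = C * ((b n : ℝ) / ((T n).card : ℝ)) := by
          field_simp
  apply tendstoInMeasure_of_sq_integral c
  · exact fun n => (Finset.aestronglyMeasurable_fun_sum _ (fun q _ => hmeas q)).const_mul _
  · filter_upwards [hne] with n hT
    have hM : MemLp (fun ω => ((T n).card : ℝ)⁻¹ * ∑ q ∈ T n, Z q ω - c) 2 volume := by
      rw [hrepr n hT]
      exact (memLp_finset_sum _ (hW2 n)).const_mul _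
    exact hM.integrable_sq
  · apply squeeze_zero' (Filter.Eventually.of_forall fun n =>
      integral_nonneg fun ω => sq_nonneg _)
    · filter_upwards [hne] with n hT
      exact key n hT
    · simpa using hratio.const_mul C

section RatioLemmas

lemma ratio_aux_quadratic (T : ℕ → Finset ((ℕ × ℕ) × (ℕ × ℕ)))
    (hcard : ∀ n, (T n).card = n * (n - 1)) :
    Tendsto (fun n => (((4:ℕ)) : ℝ) / ((T n).card : ℝ)) atTop (𝓝 0) := by
  have h1 : Tendsto (fun n : ℕ => n * (n - 1)) atTop atTop := by
    apply tendsto_atTop_mono _ (tendsto_sub_atTop_nat 1)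
    intro n
    rcases Nat.eq_zero_or_pos n with h | h
    · simp [h]
    · exact Nat.le_mul_of_pos_left _ h
  have hT : Tendsto (fun n => ((T n).card : ℝ)) atTop atTop := by
    have := tendsto_natCast_atTop_atTop (R := ℝ) |>.comp h1
    refine this.congr fun n => ?_
    simp [hcard n]
  exact Tendsto.div_atTop tendsto_const_nhds hT

lemma ratio_aux_cubic (T : ℕ → Finset ((ℕ × ℕ) × (ℕ × ℕ)))
    (hlow : ∀ n, n * (n - 1) * (n - 2) ≤ (T n).card) :
    Tendsto (fun n => (((4 * (n * (n - 1)) : ℕ)) : ℝ) / ((T n).card : ℝ)) atTop (𝓝 0) := by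
  refine squeeze_zero' (Filter.Eventually.of_forall fun n => by positivity)
    (g := fun n => 4 / ((n - 2 : ℕ) : ℝ)) ?_ ?_
  · filter_upwards [Filter.eventually_ge_atTop 3] with n hn
    have hpos : 0 < n * (n - 1) * (n - 2) :=
      Nat.mul_pos (Nat.mul_pos (by omega) (by omega)) (by omega)
    have hTpos : (0:ℝ) < ((T n).card : ℝ) := by
      have := lt_of_lt_of_le hpos (hlow n)
      exact_mod_cast this
    have hn2 : (0:ℝ) < ((n - 2 : ℕ) : ℝ) := by
      have : 0 < n - 2 := by omega
      exact_mod_cast this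
    rw [div_le_div_iff₀ hTpos hn2]
    have hnat : 4 * (n * (n - 1)) * (n - 2) ≤ 4 * (T n).card := by
      calc 4 * (n * (n - 1)) * (n - 2) = 4 * (n * (n - 1) * (n - 2)) := by ring
        _ ≤ 4 * (T n).card := Nat.mul_le_mul_left 4 (hlow n)
    calc ((4 * (n * (n - 1)) : ℕ) : ℝ) * ((n - 2 : ℕ) : ℝ)
        = ((4 * (n * (n - 1)) * (n - 2) : ℕ) : ℝ) := by push_cast; ring
      _ ≤ ((4 * (T n).card : ℕ) : ℝ) := by exact_mod_cast hnat
      _ = 4 * ((T n).card : ℝ) := by push_cast; ring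
  · exact Tendsto.div_atTop tendsto_const_nhds
      (tendsto_natCast_atTop_atTop.comp (tendsto_sub_atTop_nat 2))

end RatioLemmas

/-- For i.i.d. covariate vectors with entrywise `E[(x xᵀ)²] < ∞`, the configuration-set
averages `|Θ_i|⁻¹ Σ_{((j,k),(l,m))∈Θ_i} x_{jk} x_{lm}ᵀ` converge in probability, entrywise,
to `E[x] E[x]ᵀ` for `i ∈ {2,…,5}` and to `E[x xᵀ]` for `i = 1`. -/
theorem covariate_configuration_averages_consistent {Ω : Type} [MeasureSpace Ω]
    [IsProbabilityMeasure (volume : Measure Ω)]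
    (p : ℕ) (x : ℕ → ℕ → Ω → Fin p → ℝ)
    (hxmeas : ∀ j k, Measurable (x j k))
    (hx_ident : ∀ j k l m : ℕ, j ≠ k → l ≠ m →
      Measure.map (x j k) volume = Measure.map (x l m) volume)
    (hx_indep : iIndepFun
      (fun q : {q : ℕ × ℕ // q.1 ≠ q.2} => x q.1.1 q.1.2) volume)
    (hx_mom : ∀ a b : Fin p, Integrable (fun ω => (x 0 1 ω a * x 0 1 ω b) ^ 2) volume) :
    ∀ a b : Fin p,
      (∀ i : Fin 5, i ≠ 0 →
        TendstoInMeasure volume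
          (fun n ω => ((theta n i).card : ℝ)⁻¹ *
            ∑ q ∈ theta n i, x q.1.1 q.1.2 ω a * x q.2.1 q.2.2 ω b)
          atTop (fun _ => (∫ ω, x 0 1 ω a) * ∫ ω, x 0 1 ω b)) ∧
      TendstoInMeasure volume
        (fun n ω => ((theta n 0).card : ℝ)⁻¹ *
          ∑ q ∈ theta n 0, x q.1.1 q.1.2 ω a * x q.2.1 q.2.2 ω b)
        atTop (fun _ => ∫ ω, x 0 1 ω a * x 0 1 ω b) := by
  intro a b
  -- measurability of entries
  have hxa : ∀ j k : ℕ, Measurable fun ω => x j k ω a :=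
    fun j k => (measurable_pi_apply a).comp (hxmeas j k)
  have hxb : ∀ j k : ℕ, Measurable fun ω => x j k ω b :=
    fun j k => (measurable_pi_apply b).comp (hxmeas j k)
  have hZmeas : ∀ q : (ℕ × ℕ) × (ℕ × ℕ),
      Measurable (fun ω => x q.1.1 q.1.2 ω a * x q.2.1 q.2.2 ω b) :=
    fun q => (hxa _ _).mul (hxb _ _)
  -- transport of integrals and integrability along identical distributions
  have htr_eq : ∀ (g : (Fin p → ℝ) → ℝ), Measurable g → ∀ j k : ℕ, j ≠ k →
      ∫ ω, g (x j k ω) = ∫ ω, g (x 0 1 ω) := by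
    intro g hg j k hjk
    rw [← integral_map (hxmeas j k).aemeasurable hg.aestronglyMeasurable,
      hx_ident j k 0 1 hjk (by norm_num),
      integral_map (hxmeas 0 1).aemeasurable hg.aestronglyMeasurable]
  have htr_int : ∀ (g : (Fin p → ℝ) → ℝ), Measurable g → ∀ j k : ℕ, j ≠ k →
      Integrable (fun ω => g (x 0 1 ω)) volume → Integrable (fun ω => g (x j k ω)) volume := by
    intro g hg j k hjk hint
    have h1 : Integrable g (Measure.map (x 0 1) volume) :=
      (integrable_map_measure hg.aestronglyMeasurable (hxmeas 0 1).aemeasurable).mpr hint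
    rw [← hx_ident j k 0 1 hjk (by norm_num)] at h1
    exact (integrable_map_measure hg.aestronglyMeasurable (hxmeas j k).aemeasurable).mp h1
  -- basic moments of the reference variable
  have I4ab : Integrable (fun ω => (x 0 1 ω a * x 0 1 ω b) ^ 2) volume := hx_mom a b
  have I4a : Integrable (fun ω => (x 0 1 ω a) ^ 4) volume := by
    have h := hx_mom a a
    have he : (fun ω => (x 0 1 ω a * x 0 1 ω a) ^ 2) = fun ω => (x 0 1 ω a) ^ 4 := by
      funext ω; ring
    rwa [he] at h
  have I4b : Integrable (fun ω => (x 0 1 ω b) ^ 4) volume := by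
    have h := hx_mom b b
    have he : (fun ω => (x 0 1 ω b * x 0 1 ω b) ^ 2) = fun ω => (x 0 1 ω b) ^ 4 := by
      funext ω; ring
    rwa [he] at h
  have I2a : Integrable (fun ω => (x 0 1 ω a) ^ 2) volume := by
    refine ((integrable_const (1:ℝ)).add I4a).mono'
      ((hxa 0 1).pow_const 2).aestronglyMeasurable (Filter.Eventually.of_forall fun ω => ?_)
    have h1 := sq_nonneg ((x 0 1 ω a) ^ 2 - 1)
    simp only [Pi.add_apply, Real.norm_eq_abs]
    rw [abs_of_nonneg (sq_nonneg (x 0 1 ω a))]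
    nlinarith [sq_nonneg (x 0 1 ω a)]
  have I2b : Integrable (fun ω => (x 0 1 ω b) ^ 2) volume := by
    refine ((integrable_const (1:ℝ)).add I4b).mono'
      ((hxb 0 1).pow_const 2).aestronglyMeasurable (Filter.Eventually.of_forall fun ω => ?_)
    have h1 := sq_nonneg ((x 0 1 ω b) ^ 2 - 1)
    simp only [Pi.add_apply, Real.norm_eq_abs]
    rw [abs_of_nonneg (sq_nonneg (x 0 1 ω b))]
    nlinarith [sq_nonneg (x 0 1 ω b)]
  have M2a : MemLp (fun ω => x 0 1 ω a) 2 volume :=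
    (memLp_two_iff_integrable_sq (hxa 0 1).aestronglyMeasurable).mpr I2a
  have M2b : MemLp (fun ω => x 0 1 ω b) 2 volume :=
    (memLp_two_iff_integrable_sq (hxb 0 1).aestronglyMeasurable).mpr I2b
  have I1a : Integrable (fun ω => x 0 1 ω a) volume := M2a.integrable one_le_two
  have I1b : Integrable (fun ω => x 0 1 ω b) volume := M2b.integrable one_le_two
  -- the uniform second-moment bound
  set C : ℝ := max ((∫ ω, (x 0 1 ω a) ^ 2) * ∫ ω, (x 0 1 ω b) ^ 2)
    (∫ ω, (x 0 1 ω a * x 0 1 ω b) ^ 2) with hCdef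
  -- pairwise independence of distinct dyads, composed with measurable maps
  have hIndPair : ∀ (d e : ℕ × ℕ), d.1 ≠ d.2 → e.1 ≠ e.2 → d ≠ e →
      ∀ (g g' : (Fin p → ℝ) → ℝ), Measurable g → Measurable g' →
      IndepFun (fun ω => g (x d.1 d.2 ω)) (fun ω => g' (x e.1 e.2 ω)) volume := by
    intro d e hd he hde g g' hg hg'
    have hij : (⟨d, hd⟩ : {q : ℕ × ℕ // q.1 ≠ q.2}) ≠ ⟨e, he⟩ :=
      fun hEq => hde (congrArg Subtype.val hEq)
    exact (hx_indep.indepFun hij).comp hg hg'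
  -- facts for a pair of distinct dyads
  have hfacts : ∀ q : (ℕ × ℕ) × (ℕ × ℕ), q.1.1 ≠ q.1.2 → q.2.1 ≠ q.2.2 → q.1 ≠ q.2 →
      MemLp (fun ω => x q.1.1 q.1.2 ω a * x q.2.1 q.2.2 ω b) 2 volume ∧
      (∫ ω, x q.1.1 q.1.2 ω a * x q.2.1 q.2.2 ω b) = (∫ ω, x 0 1 ω a) * ∫ ω, x 0 1 ω b ∧
      (∫ ω, (x q.1.1 q.1.2 ω a * x q.2.1 q.2.2 ω b) ^ 2) ≤ C := by
    intro q h1 h2 hne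
    have hIa : Integrable (fun ω => x q.1.1 q.1.2 ω a) volume :=
      htr_int (fun v => v a) (measurable_pi_apply a) _ _ h1 I1a
    have hIb : Integrable (fun ω => x q.2.1 q.2.2 ω b) volume :=
      htr_int (fun v => v b) (measurable_pi_apply b) _ _ h2 I1b
    have hI2a : Integrable (fun ω => (x q.1.1 q.1.2 ω a) ^ 2) volume :=
      htr_int (fun v => (v a) ^ 2) ((measurable_pi_apply a).pow_const 2) _ _ h1 I2a
    have hI2b : Integrable (fun ω => (x q.2.1 q.2.2 ω b) ^ 2) volume :=
      htr_int (fun v => (v b) ^ 2) ((measurable_pi_apply b).pow_const 2) _ _ h2 I2b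
    have hind := hIndPair q.1 q.2 h1 h2 (fun h => hne h) (fun v => v a) (fun v => v b)
      (measurable_pi_apply a) (measurable_pi_apply b)
    have hind2 := hIndPair q.1 q.2 h1 h2 (fun h => hne h) (fun v => (v a) ^ 2)
      (fun v => (v b) ^ 2) ((measurable_pi_apply a).pow_const 2)
      ((measurable_pi_apply b).pow_const 2)
    have hSq2 : (fun ω => (x q.1.1 q.1.2 ω a * x q.2.1 q.2.2 ω b) ^ 2) =
        fun ω => (x q.1.1 q.1.2 ω a) ^ 2 * (x q.2.1 q.2.2 ω b) ^ 2 := by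
      funext ω; ring
    have hmean : (∫ ω, x q.1.1 q.1.2 ω a * x q.2.1 q.2.2 ω b) =
        (∫ ω, x 0 1 ω a) * ∫ ω, x 0 1 ω b := by
      have h := hind.integral_fun_mul_eq_mul_integral hIa.aestronglyMeasurable hIb.aestronglyMeasurable
      rw [htr_eq (fun v => v a) (measurable_pi_apply a) _ _ h1,
        htr_eq (fun v => v b) (measurable_pi_apply b) _ _ h2] at h
      exact h
    have hsq_eq : (∫ ω, (x q.1.1 q.1.2 ω a * x q.2.1 q.2.2 ω b) ^ 2) =
        (∫ ω, (x 0 1 ω a) ^ 2) * ∫ ω, (x 0 1 ω b) ^ 2 := by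
      rw [hSq2]
      have h := hind2.integral_fun_mul_eq_mul_integral hI2a.aestronglyMeasurable hI2b.aestronglyMeasurable
      rw [htr_eq (fun v => (v a) ^ 2) ((measurable_pi_apply a).pow_const 2) _ _ h1,
        htr_eq (fun v => (v b) ^ 2) ((measurable_pi_apply b).pow_const 2) _ _ h2] at h
      exact h
    refine ⟨?_, hmean, ?_⟩
    · rw [memLp_two_iff_integrable_sq (hZmeas q).aestronglyMeasurable, hSq2]
      exact hind2.integrable_mul hI2a hI2b
    · rw [hsq_eq]
      exact le_max_left _ _
  -- facts for a repeated dyad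
  have hgab : Measurable (fun v : Fin p → ℝ => v a * v b) :=
    (measurable_pi_apply a).mul (measurable_pi_apply b)
  have hgab2 : Measurable (fun v : Fin p → ℝ => (v a * v b) ^ 2) := hgab.pow_const 2
  have hfacts0 : ∀ d : ℕ × ℕ, d.1 ≠ d.2 →
      MemLp (fun ω => x d.1 d.2 ω a * x d.1 d.2 ω b) 2 volume ∧
      (∫ ω, x d.1 d.2 ω a * x d.1 d.2 ω b) = (∫ ω, x 0 1 ω a * x 0 1 ω b) ∧
      (∫ ω, (x d.1 d.2 ω a * x d.1 d.2 ω b) ^ 2) ≤ C := by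
    intro d hd
    refine ⟨?_, htr_eq (fun v => v a * v b) hgab d.1 d.2 hd, ?_⟩
    · rw [memLp_two_iff_integrable_sq ((hxa d.1 d.2).fun_mul (hxb d.1 d.2)).aestronglyMeasurable]
      exact htr_int (fun v => (v a * v b) ^ 2) hgab2 d.1 d.2 hd I4ab
    · rw [htr_eq (fun v => (v a * v b) ^ 2) hgab2 d.1 d.2 hd]
      exact le_max_right _ _
  -- decorrelation across disjoint dyad pairs
  have hdecQ : ∀ q q' : (ℕ × ℕ) × (ℕ × ℕ), ∀ (h1 : q.1.1 ≠ q.1.2) (h2 : q.2.1 ≠ q.2.2)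
      (h1' : q'.1.1 ≠ q'.1.2) (h2' : q'.2.1 ≠ q'.2.2),
      q'.1 ≠ q.1 → q'.1 ≠ q.2 → q'.2 ≠ q.1 → q'.2 ≠ q.2 →
      Integrable (fun ω => x q.1.1 q.1.2 ω a * x q.2.1 q.2.2 ω b) volume →
      Integrable (fun ω => x q'.1.1 q'.1.2 ω a * x q'.2.1 q'.2.2 ω b) volume →
      ∫ ω, (x q.1.1 q.1.2 ω a * x q.2.1 q.2.2 ω b) *
          (x q'.1.1 q'.1.2 ω a * x q'.2.1 q'.2.2 ω b) =
        (∫ ω, x q.1.1 q.1.2 ω a * x q.2.1 q.2.2 ω b) *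
          ∫ ω, x q'.1.1 q'.1.2 ω a * x q'.2.1 q'.2.2 ω b := by
    intro q q' h1 h2 h1' h2' e1 e2 e3 e4 hint hint'
    classical
    set S : Finset {r : ℕ × ℕ // r.1 ≠ r.2} := {⟨q.1, h1⟩, ⟨q.2, h2⟩} with hS
    set Tt : Finset {r : ℕ × ℕ // r.1 ≠ r.2} := {⟨q'.1, h1'⟩, ⟨q'.2, h2'⟩} with hT
    have hST : Disjoint S Tt := by
      rw [Finset.disjoint_left]
      intro i hi hj
      simp only [hS, hT, Finset.mem_insert, Finset.mem_singleton] at hi hj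
      rcases hi with rfl | rfl <;> rcases hj with hj | hj
      · exact e1 (congrArg Subtype.val hj).symm
      · exact e3 (congrArg Subtype.val hj).symm
      · exact e2 (congrArg Subtype.val hj).symm
      · exact e4 (congrArg Subtype.val hj).symm
    have m1 : (⟨q.1, h1⟩ : {r : ℕ × ℕ // r.1 ≠ r.2}) ∈ S := by simp [hS]
    have m2 : (⟨q.2, h2⟩ : {r : ℕ × ℕ // r.1 ≠ r.2}) ∈ S := by simp [hS]
    have m1' : (⟨q'.1, h1'⟩ : {r : ℕ × ℕ // r.1 ≠ r.2}) ∈ Tt := by simp [hT]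
    have m2' : (⟨q'.2, h2'⟩ : {r : ℕ × ℕ // r.1 ≠ r.2}) ∈ Tt := by simp [hT]
    have hfin := hx_indep.indepFun_finset S Tt hST (fun i => hxmeas i.1.1 i.1.2)
    have hφ : Measurable (fun g : (S → (Fin p → ℝ)) =>
        g ⟨⟨q.1, h1⟩, m1⟩ a * g ⟨⟨q.2, h2⟩, m2⟩ b) :=
      ((measurable_pi_apply a).comp (measurable_pi_apply _)).fun_mul
        ((measurable_pi_apply b).comp (measurable_pi_apply _))
    have hψ : Measurable (fun g : (Tt → (Fin p → ℝ)) =>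
        g ⟨⟨q'.1, h1'⟩, m1'⟩ a * g ⟨⟨q'.2, h2'⟩, m2'⟩ b) :=
      ((measurable_pi_apply a).comp (measurable_pi_apply _)).fun_mul
        ((measurable_pi_apply b).comp (measurable_pi_apply _))
    have hind := hfin.comp hφ hψ
    exact hind.integral_fun_mul_eq_mul_integral hint.aestronglyMeasurable hint'.aestronglyMeasurable
  -- dyad membership gives distinct coordinates
  have hdyad : ∀ {n : ℕ} {d : ℕ × ℕ}, d ∈ dyads n → d.1 ≠ d.2 :=
    fun h => (mem_dyads.mp h).2.2
  constructor
  · -- the four nontrivial configurations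
    intro i hi
    -- validity extraction for each configuration
    have hval1 : ∀ {n : ℕ} {q : (ℕ × ℕ) × (ℕ × ℕ)}, q ∈ theta n 1 →
        q.1.1 ≠ q.1.2 ∧ q.2.1 ≠ q.2.2 ∧ q.1 ≠ q.2 := by
      intro n q hq
      rw [theta_one, Finset.mem_filter, Finset.mem_product] at hq
      obtain ⟨⟨hd1, hd2⟩, hc1, hc2⟩ := hq
      refine ⟨hdyad hd1, hdyad hd2, fun hEq => ?_⟩
      have e := Prod.ext_iff.mp hEq
      exact hdyad hd1 (by omega)
    have hval2 : ∀ {n : ℕ} {q : (ℕ × ℕ) × (ℕ × ℕ)}, q ∈ theta n 2 →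
        q.1.1 ≠ q.1.2 ∧ q.2.1 ≠ q.2.2 ∧ q.1 ≠ q.2 := by
      intro n q hq
      rw [theta_two, Finset.mem_filter, Finset.mem_product] at hq
      obtain ⟨⟨hd1, hd2⟩, hc1, hc2, hc3⟩ := hq
      exact ⟨hdyad hd1, hdyad hd2, fun hEq => hc2 (Prod.ext_iff.mp hEq).1.symm⟩
    have hval3 : ∀ {n : ℕ} {q : (ℕ × ℕ) × (ℕ × ℕ)}, q ∈ theta n 3 →
        q.1.1 ≠ q.1.2 ∧ q.2.1 ≠ q.2.2 ∧ q.1 ≠ q.2 := by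
      intro n q hq
      rw [theta_three, Finset.mem_filter, Finset.mem_product] at hq
      obtain ⟨⟨hd1, hd2⟩, hc1, hc2, hc3⟩ := hq
      exact ⟨hdyad hd1, hdyad hd2, fun hEq => hc2 (Prod.ext_iff.mp hEq).2.symm⟩
    have hval4 : ∀ {n : ℕ} {q : (ℕ × ℕ) × (ℕ × ℕ)}, q ∈ theta n 4 →
        q.1.1 ≠ q.1.2 ∧ q.2.1 ≠ q.2.2 ∧ q.1 ≠ q.2 := by
      intro n q hq
      rw [theta_four, Finset.mem_filter, Finset.mem_product] at hq
      obtain ⟨⟨hd1, hd2⟩, hc⟩ := hq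
      refine ⟨hdyad hd1, hdyad hd2, fun hEq => ?_⟩
      have e := Prod.ext_iff.mp hEq
      have hd := hdyad hd1
      rcases hc with ⟨l1, l2, l3⟩ | ⟨r1, r2, r3⟩
      · exact hd (by omega)
      · exact hd (by omega)
    -- uniform treatment of configurations 1–4
    have main : ∀ (i' : Fin 5) (bfun : ℕ → ℕ),
        (∀ {n : ℕ} {q : (ℕ × ℕ) × (ℕ × ℕ)}, q ∈ theta n i' →
          q.1.1 ≠ q.1.2 ∧ q.2.1 ≠ q.2.2 ∧ q.1 ≠ q.2) →
        (∀ (n : ℕ), ∀ q ∈ theta n i',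
          ((theta n i').filter fun q' =>
            q'.1 = q.1 ∨ q'.1 = q.2 ∨ q'.2 = q.1 ∨ q'.2 = q.2).card ≤ bfun n) →
        (∀ᶠ n in atTop, (theta n i').card ≠ 0) →
        Tendsto (fun n => ((bfun n : ℕ) : ℝ) / ((theta n i').card : ℝ))
          atTop (𝓝 0) →
        TendstoInMeasure volume
          (fun n ω => ((theta n i').card : ℝ)⁻¹ *
            ∑ q ∈ theta n i', x q.1.1 q.1.2 ω a * x q.2.1 q.2.2 ω b)
          atTop (fun _ => (∫ ω, x 0 1 ω a) * ∫ ω, x 0 1 ω b) := by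
      intro i' bfun hval hover hne hratio
      refine engine (fun q ω => x q.1.1 q.1.2 ω a * x q.2.1 q.2.2 ω b)
        (fun n => theta n i') _ C bfun
        (fun q => (hZmeas q).aestronglyMeasurable) ?_ ?_ ?_ ?_ hover hne hratio
      · intro n q hq
        obtain ⟨h1, h2, h3⟩ := hval hq
        exact (hfacts q h1 h2 h3).1
      · intro n q hq
        obtain ⟨h1, h2, h3⟩ := hval hq
        exact (hfacts q h1 h2 h3).2.1
      · intro n q hq
        obtain ⟨h1, h2, h3⟩ := hval hq
        exact (hfacts q h1 h2 h3).2.2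
      · intro n q hq q' hq' e1 e2 e3 e4
        obtain ⟨h1, h2, h3⟩ := hval hq
        obtain ⟨h1', h2', h3'⟩ := hval hq'
        exact hdecQ q q' h1 h2 h1' h2' e1 e2 e3 e4
          ((hfacts q h1 h2 h3).1.integrable one_le_two)
          ((hfacts q' h1' h2' h3').1.integrable one_le_two)
    -- cardinality lower bounds for configurations 2–4
    have hlow2 : ∀ n, n * (n - 1) * (n - 2) ≤ (theta n 2).card :=
      fun n => (card_trip n) ▸ card_trip_le_theta_two n
    have hlow3 : ∀ n, n * (n - 1) * (n - 2) ≤ (theta n 3).card :=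
      fun n => (card_trip n) ▸ card_trip_le_theta_three n
    have hlow4 : ∀ n, n * (n - 1) * (n - 2) ≤ (theta n 4).card :=
      fun n => (card_trip n) ▸ card_trip_le_theta_four n
    have hne_of_low : ∀ (i' : Fin 5), (∀ n, n * (n - 1) * (n - 2) ≤ (theta n i').card) →
        ∀ᶠ n in atTop, (theta n i').card ≠ 0 := by
      intro i' hlow
      filter_upwards [Filter.eventually_ge_atTop 3] with n hn
      have h := hlow n
      have hpos : 0 < n * (n - 1) * (n - 2) :=
        Nat.mul_pos (Nat.mul_pos (by omega) (by omega)) (by omega)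
      omega
    -- configuration 1 (reciprocal): quadratic count
    have hne1 : ∀ᶠ n in atTop, (theta n 1).card ≠ 0 := by
      filter_upwards [Filter.eventually_ge_atTop 2] with n hn
      rw [card_theta_one]
      have : 0 < n * (n - 1) := Nat.mul_pos (by omega) (by omega)
      omega
    fin_cases i
    · exact absurd rfl hi
    · exact main 1 (fun _ => 4) (fun hq => hval1 hq) (fun n q _ => overlap_le_one n q)
        hne1 (ratio_aux_quadratic _ card_theta_one)
    · exact main 2 (fun n => 4 * (n * (n - 1))) (fun hq => hval2 hq)
        (fun n q _ => overlap_le_gen n 2 q) (hne_of_low 2 hlow2) (ratio_aux_cubic _ hlow2)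
    · exact main 3 (fun n => 4 * (n * (n - 1))) (fun hq => hval3 hq)
        (fun n q _ => overlap_le_gen n 3 q) (hne_of_low 3 hlow3) (ratio_aux_cubic _ hlow3)
    · exact main 4 (fun n => 4 * (n * (n - 1))) (fun hq => hval4 hq)
        (fun n q _ => overlap_le_gen n 4 q) (hne_of_low 4 hlow4) (ratio_aux_cubic _ hlow4)
  · -- configuration 0 (identical)
    have hval0 : ∀ {n : ℕ} {q : (ℕ × ℕ) × (ℕ × ℕ)}, q ∈ theta n 0 →
        q.1.1 ≠ q.1.2 ∧ q.2 = q.1 := by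
      intro n q hq
      rw [theta_zero, Finset.mem_filter, Finset.mem_product] at hq
      exact ⟨hdyad hq.1.1, hq.2⟩
    have hL20 : ∀ n : ℕ, ∀ q ∈ theta n 0,
        MemLp (fun ω => x q.1.1 q.1.2 ω a * x q.2.1 q.2.2 ω b) 2 volume := by
      intro n q hq
      obtain ⟨h1, h2⟩ := hval0 hq
      have e1 : q.2.1 = q.1.1 := by rw [h2]
      have e2 : q.2.2 = q.1.2 := by rw [h2]
      rw [e1, e2]
      exact (hfacts0 q.1 h1).1
    have hne0 : ∀ᶠ n in atTop, (theta n 0).card ≠ 0 := by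
      filter_upwards [Filter.eventually_ge_atTop 2] with n hn
      rw [card_theta_zero]
      have : 0 < n * (n - 1) := Nat.mul_pos (by omega) (by omega)
      omega
    refine engine (fun q ω => x q.1.1 q.1.2 ω a * x q.2.1 q.2.2 ω b)
      (fun n => theta n 0) _ C (fun _ => 4)
      (fun q => (hZmeas q).aestronglyMeasurable) hL20 ?_ ?_ ?_ ?_ hne0
      (ratio_aux_quadratic _ card_theta_zero)
    · intro n q hq
      obtain ⟨h1, h2⟩ := hval0 hq
      have e1 : q.2.1 = q.1.1 := by rw [h2]
      have e2 : q.2.2 = q.1.2 := by rw [h2]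
      beta_reduce
      rw [e1, e2]
      exact (hfacts0 q.1 h1).2.1
    · intro n q hq
      obtain ⟨h1, h2⟩ := hval0 hq
      have e1 : q.2.1 = q.1.1 := by rw [h2]
      have e2 : q.2.2 = q.1.2 := by rw [h2]
      beta_reduce
      rw [e1, e2]
      exact (hfacts0 q.1 h1).2.2
    · intro n q hq q' hq' e1 e2 e3 e4
      obtain ⟨h1, h2⟩ := hval0 hq
      obtain ⟨h1', h2'⟩ := hval0 hq'
      have hv2 : q.2.1 ≠ q.2.2 := by rw [h2]; exact h1
      have hv2' : q'.2.1 ≠ q'.2.2 := by rw [h2']; exact h1'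
      exact hdecQ q q' h1 hv2 h1' hv2' e1 e2 e3 e4
        ((hL20 n q hq).integrable one_le_two) ((hL20 n q' hq').integrable one_le_two)
    · intro n q _
      exact overlap_le_zero n q
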